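/- Let A, B, C, D be topological groups and let p: A → B and q: C → D be continuous surjective group homomorphisms that are covering maps, whose kernels are {1, a} and {1, c} respectively, where a is a central element of A of order 2 and c is a central element of C of order 2. Let Z be the subgroup of A × C generated by (a, c). Then the induced map Φ: (A × C)/Z → B × D, sending the class of (x, y) to (p(x), q(y)), is a well-defined continuous group homomorphism which is a covering map, and every fiber of Φ has exactly two elements. -/

import Mathlib

/-- The subgroup generated by a central element is normal. -/
theorem closure_singleton_central_normal {G : Type*} [Group G] {x : G}
    (hx : ∀ g : G, g * x = x * g) : (Subgroup.closure {x}).Normal := by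
  have hle : Subgroup.closure {x} ≤ Subgroup.center G := by
    rw [Subgroup.closure_le]
    intro y hy
    rcases hy with rfl
    rw [SetLike.mem_coe, Subgroup.mem_center_iff]
    exact hx
  constructor
  intro n hn g
  have hc := Subgroup.mem_center_iff.mp (hle hn) g
  have : g * n * g⁻¹ = n := by rw [hc]; group
  rwa [this]


open Set in
theorem isEvenlyCovered_of_two_sections {E X : Type*} [TopologicalSpace E] [TopologicalSpace X]
    {f : E → X} (hf : Continuous f) {U : Set X} (hU : IsOpen U) {x₀ : X} (hx₀ : x₀ ∈ U)
    {s₀ s₁ : X → E} (hs₀ : ContinuousOn s₀ U) (hs₁ : ContinuousOn s₁ U)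
    (hfs₀ : ∀ x ∈ U, f (s₀ x) = x) (hfs₁ : ∀ x ∈ U, f (s₁ x) = x)
    (hcover : ∀ e : E, f e ∈ U → e = s₀ (f e) ∨ e = s₁ (f e))
    (hdisj : ∀ x ∈ U, s₀ x ≠ s₁ x)
    (hV₀ : IsOpen (s₀ '' U)) (hV₁ : IsOpen (s₁ '' U)) :
    IsEvenlyCovered f x₀ Bool := by
  classical
  -- disjointness of the two sheets
  have hdisj' : ∀ x ∈ U, ∀ y ∈ U, s₀ x ≠ s₁ y := by
    intro x hx y hy h
    have : x = y := by rw [← hfs₀ x hx, ← hfs₁ y hy, h]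
    exact hdisj x hx (this ▸ h)
  have hmem₁ : ∀ e : E, f e ∈ U → (e ∈ s₁ '' U ↔ e = s₁ (f e)) := by
    intro e he
    constructor
    · rintro ⟨x, hx, rfl⟩; rw [hfs₁ x hx]
    · intro h; exact ⟨f e, he, h.symm⟩
  have hnotmem₀ : ∀ x ∈ U, s₀ x ∉ s₁ '' U := by
    rintro x hx ⟨y, hy, h⟩
    exact hdisj' x hx y hy h.symm
  have hsrc : f ⁻¹' U ⊆ s₀ '' U ∪ s₁ '' U := by
    intro e he
    rcases hcover e he with h | h
    · exact Or.inl ⟨f e, he, h.symm⟩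
    · exact Or.inr ⟨f e, he, h.symm⟩
  refine IsEvenlyCovered.of_trivialization (t := ⟨{
    toFun := fun e => (f e, decide (e ∈ s₁ '' U))
    invFun := fun z => bif z.2 then s₁ z.1 else s₀ z.1
    source := f ⁻¹' U
    target := U ×ˢ (univ : Set Bool)
    map_source' := fun e he => ⟨he, trivial⟩
    map_target' := by
      rintro ⟨x, b⟩ ⟨hx, -⟩
      cases b <;> simp only [cond] <;>
        [skip; skip] <;> simp [mem_preimage, hfs₀ x hx, hfs₁ x hx, hx]
    left_inv' := by
      intro e he
      by_cases h : e ∈ s₁ '' U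
      · simp only [h, decide_eq_true h, cond]
        exact ((hmem₁ e he).1 h).symm
      · simp only [h, decide_eq_false h, cond]
        rcases hcover e he with h' | h'
        · exact h'.symm
        · exact absurd ((hmem₁ e he).2 h') h
    right_inv' := by
      rintro ⟨x, b⟩ ⟨hx, -⟩
      cases b
      · simp only [cond]
        exact Prod.ext (hfs₀ x hx) (by simp [hnotmem₀ x hx])
      · simp only [cond]
        exact Prod.ext (hfs₁ x hx) (by simp [mem_image_of_mem _ hx])
    open_source := hU.preimage hf
    open_target := hU.prod isOpen_univ
    continuousOn_toFun := by
      apply continuousOn_of_forall_continuousAt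
      intro e he
      rcases hsrc he with h | h
      · have hnb : s₀ '' U ∈ nhds e := hV₀.mem_nhds h
        apply ContinuousAt.congr (f := fun e => (f e, false))
          (hf.continuousAt.prodMk continuousAt_const)
        filter_upwards [hnb] with e' he'
        rcases he' with ⟨x, hx, rfl⟩
        simp [hnotmem₀ x hx]
      · have hnb : s₁ '' U ∈ nhds e := hV₁.mem_nhds h
        apply ContinuousAt.congr (f := fun e => (f e, true))
          (hf.continuousAt.prodMk continuousAt_const)
        filter_upwards [hnb] with e' he'
        simp [he']
    continuousOn_invFun := by
      apply continuousOn_of_forall_continuousAt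
      rintro ⟨x, b⟩ ⟨hx, -⟩
      have hnb : U ×ˢ ({b} : Set Bool) ∈ nhds (x, b) :=
        (hU.prod (isOpen_discrete _)).mem_nhds ⟨hx, rfl⟩
      have hcx : ContinuousAt (fun z : X × Bool => bif b then s₁ z.1 else s₀ z.1) (x, b) := by
        cases b
        · exact (hs₀.continuousAt (hU.mem_nhds hx)).comp continuousAt_fst
        · exact (hs₁.continuousAt (hU.mem_nhds hx)).comp continuousAt_fst
      apply ContinuousAt.congr hcx
      filter_upwards [hnb] with z hz
      rw [hz.2]
  }, U, hU, rfl, rfl, fun p _ => rfl⟩) hx₀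

/-- (General form of part (1) of the paper's Proposition 2.1.)
If `p : A → B` and `q : C → D` are continuous surjective homomorphisms of topological
groups which are covering maps with kernels `{1, a}` and `{1, c}`, where `a` and `c`
are central of order two, then the induced homomorphism
`(A × C)/⟨(a, c)⟩ → B × D` is continuous, is a covering map, and has all fibres
of cardinality two. -/
theorem statement6 {A B C D : Type*}
    [Group A] [TopologicalSpace A] [IsTopologicalGroup A]
    [Group B] [TopologicalSpace B] [IsTopologicalGroup B]
    [Group C] [TopologicalSpace C] [IsTopologicalGroup C]
    [Group D] [TopologicalSpace D] [IsTopologicalGroup D]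
    (p : A →* B) (q : C →* D)
    (hp_cont : Continuous p) (hq_cont : Continuous q)
    (hp_surj : Function.Surjective p) (hq_surj : Function.Surjective q)
    (hp_cov : IsCoveringMap p) (hq_cov : IsCoveringMap q)
    (a : A) (c : C)
    (ha_cent : ∀ x : A, x * a = a * x) (hc_cent : ∀ y : C, y * c = c * y)
    (ha_ne : a ≠ 1) (ha_sq : a * a = 1)
    (hc_ne : c ≠ 1) (hc_sq : c * c = 1)
    (hker_p : (MonoidHom.ker p : Set A) = {1, a})
    (hker_q : (MonoidHom.ker q : Set C) = {1, c}) :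
    letI : (Subgroup.closure {((a, c) : A × C)}).Normal :=
      closure_singleton_central_normal
        (fun g => Prod.ext (ha_cent g.1) (hc_cent g.2))
    ∃ Φ : ((A × C) ⧸ Subgroup.closure {((a, c) : A × C)}) →* B × D,
      (∀ (x : A) (y : C), Φ (QuotientGroup.mk (x, y)) = (p x, q y)) ∧
      Continuous Φ ∧
      IsCoveringMap Φ ∧
      (∀ z : B × D, Nat.card (⇑Φ ⁻¹' {z}) = 2) := by
  letI : (Subgroup.closure {((a, c) : A × C)}).Normal :=
    closure_singleton_central_normal
      (fun g => Prod.ext (ha_cent g.1) (hc_cent g.2))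
  set Z : Subgroup (A × C) := Subgroup.closure {((a, c) : A × C)} with hZ
  -- kernel facts
  have ha_ker : p a = 1 := by
    have : a ∈ (MonoidHom.ker p : Set A) := by rw [hker_p]; simp
    exact this
  have hc_ker : q c = 1 := by
    have : c ∈ (MonoidHom.ker q : Set C) := by rw [hker_q]; simp
    exact this
  -- Z as a set is {1, (a,c)}
  have hac_sq : ((a, c) : A × C) * (a, c) = 1 := Prod.ext ha_sq hc_sq
  have hZset : (Z : Set (A × C)) = {1, ((a, c) : A × C)} := by
    apply le_antisymm
    · rw [hZ]
      have : ({1, ((a, c) : A × C)} : Set (A × C)) =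
          (({ carrier := {1, ((a, c) : A × C)}
              one_mem' := by simp
              mul_mem' := by
                rintro x y (rfl | rfl) (rfl | rfl) <;> simp [hac_sq]
              inv_mem' := by
                rintro x (rfl | rfl)
                · simp
                · right
                  rw [Set.mem_singleton_iff, inv_eq_iff_mul_eq_one, hac_sq] } : Subgroup (A × C)) :
            Set (A × C)) := rfl
      rw [this]
      exact Subgroup.closure_le _ |>.2 (by intro x hx; rcases hx with rfl; simp)
    · rintro x (rfl | rfl)
      · exact Z.one_mem
      · exact Subgroup.subset_closure rfl
  have hZmem : ∀ u : A × C, u ∈ Z ↔ u = 1 ∨ u = (a, c) := by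
    intro u
    rw [← SetLike.mem_coe, hZset, Set.mem_insert_iff, Set.mem_singleton_iff]
  have hcomm : ∀ u : A × C, u * ((a, c) : A × C) = (a, c) * u :=
    fun u => Prod.ext (ha_cent u.1) (hc_cent u.2)
  -- quotient equality criterion
  have hmkeq : ∀ u v : A × C, (QuotientGroup.mk u : (A × C) ⧸ Z) = QuotientGroup.mk v ↔
      v = u ∨ v = (a, c) * u := by
    intro u v
    rw [QuotientGroup.eq, hZmem]
    constructor
    · rintro (h | h)
      · left; exact (inv_mul_eq_one.mp h).symm
      · right
        rw [inv_mul_eq_iff_eq_mul.mp h, hcomm u]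
    · rintro (rfl | rfl)
      · left; exact inv_mul_cancel _
      · right
        rw [← hcomm _]
        exact inv_mul_cancel_left _ _
  -- fibre descriptions for p and q
  have key_p : ∀ u x : A, p u = p x → u = x ∨ u = a * x := by
    intro u x h
    have : u * x⁻¹ ∈ (MonoidHom.ker p : Set A) := by
      rw [SetLike.mem_coe, MonoidHom.mem_ker, map_mul, map_inv, h, mul_inv_cancel]
    rw [hker_p] at this
    rcases this with h' | h'
    · left; exact mul_inv_eq_one.mp h'
    · right; exact mul_inv_eq_iff_eq_mul.mp h'
  have key_q : ∀ v y : C, q v = q y → v = y ∨ v = c * y := by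
    intro v y h
    have : v * y⁻¹ ∈ (MonoidHom.ker q : Set C) := by
      rw [SetLike.mem_coe, MonoidHom.mem_ker, map_mul, map_inv, h, mul_inv_cancel]
    rw [hker_q] at this
    rcases this with h' | h'
    · left; exact mul_inv_eq_one.mp h'
    · right; exact mul_inv_eq_iff_eq_mul.mp h'
  -- the homomorphism
  have hZle : Z ≤ (p.prodMap q).ker := by
    rw [hZ, Subgroup.closure_le]
    intro x hx
    rcases hx with rfl
    rw [SetLike.mem_coe, MonoidHom.mem_ker]
    exact Prod.ext ha_ker hc_ker
  set Φ : ((A × C) ⧸ Z) →* B × D := QuotientGroup.lift Z (p.prodMap q) hZle with hΦdef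
  have hΦmk : ∀ u : A × C, Φ (QuotientGroup.mk u) = (p u.1, q u.2) := fun u => rfl
  have hΦc : Continuous Φ :=
    (QuotientGroup.isOpenQuotientMap_mk.isQuotientMap.continuous_iff).mpr
      (hp_cont.prodMap hq_cont)
  refine ⟨Φ, fun x y => rfl, hΦc, ?_, ?_⟩
  · -- covering map
    intro z
    obtain ⟨x₀, hx₀⟩ := hp_surj z.1
    obtain ⟨y₀, hy₀⟩ := hq_surj z.2
    obtain ⟨ep, hx₀s, hpe⟩ := hp_cov.isLocalHomeomorph x₀
    obtain ⟨eqq, hy₀s, hqe⟩ := hq_cov.isLocalHomeomorph y₀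
    have hsp : ∀ b ∈ ep.target, p (ep.symm b) = b := by
      intro b hb; rw [hpe]; exact ep.right_inv hb
    have hsq : ∀ d ∈ eqq.target, q (eqq.symm d) = d := by
      intro d hd; rw [hqe]; exact eqq.right_inv hd
    have hb₀ : z.1 ∈ ep.target := by
      rw [← hx₀, hpe]; exact ep.map_source hx₀s
    have hd₀ : z.2 ∈ eqq.target := by
      rw [← hy₀, hqe]; exact eqq.map_source hy₀s
    set U : Set (B × D) := ep.target ×ˢ eqq.target with hUdef
    have hU : IsOpen U := ep.open_target.prod eqq.open_target
    have hz : z ∈ U := ⟨hb₀, hd₀⟩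
    set s₀ : B × D → ((A × C) ⧸ Z) :=
      fun w => QuotientGroup.mk (ep.symm w.1, eqq.symm w.2) with hs₀def
    set s₁ : B × D → ((A × C) ⧸ Z) :=
      fun w => QuotientGroup.mk (a * ep.symm w.1, eqq.symm w.2) with hs₁def
    have hπc : Continuous (QuotientGroup.mk : A × C → (A × C) ⧸ Z) :=
      QuotientGroup.isOpenQuotientMap_mk.continuous
    have hspc : ContinuousOn (fun w : B × D => ((ep.symm w.1 : A), (eqq.symm w.2 : C))) U :=
      (ep.symm.continuousOn.comp continuousOn_fst fun w hw => hw.1).prodMk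
        (eqq.symm.continuousOn.comp continuousOn_snd fun w hw => hw.2)
    have hs₀c : ContinuousOn s₀ U := hπc.comp_continuousOn hspc
    have hs₁c : ContinuousOn s₁ U := by
      apply hπc.comp_continuousOn
      exact ((continuous_mul_left a).comp_continuousOn
        (ep.symm.continuousOn.comp continuousOn_fst fun w hw => hw.1)).prodMk
        (eqq.symm.continuousOn.comp continuousOn_snd fun w hw => hw.2)
    have hfs₀ : ∀ w ∈ U, Φ (s₀ w) = w := by
      intro w hw
      rw [hs₀def]
      exact Prod.ext (hsp w.1 hw.1) (hsq w.2 hw.2)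
    have hfs₁ : ∀ w ∈ U, Φ (s₁ w) = w := by
      intro w hw
      rw [hs₁def]
      refine Prod.ext ?_ (hsq w.2 hw.2)
      show p (a * ep.symm w.1) = w.1
      rw [map_mul, ha_ker, one_mul, hsp w.1 hw.1]
    have hcover : ∀ e, Φ e ∈ U → e = s₀ (Φ e) ∨ e = s₁ (Φ e) := by
      intro e
      induction e using QuotientGroup.induction_on with
      | H g =>
        obtain ⟨x, y⟩ := g
        intro hg
        rw [hΦmk] at hg ⊢
        have hx : x = ep.symm (p x) ∨ x = a * ep.symm (p x) :=
          key_p x _ (hsp _ hg.1).symm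
        have hy : y = eqq.symm (q y) ∨ y = c * eqq.symm (q y) :=
          key_q y _ (hsq _ hg.2).symm
        simp only [hs₀def, hs₁def]
        set sx := ep.symm (p x) with hsx
        set sy := eqq.symm (q y) with hsy
        rcases hx with hx' | hx' <;> rcases hy with hy' | hy'
        · exact Or.inl ((hmkeq _ _).mpr (Or.inl (Prod.ext hx'.symm hy'.symm)))
        · refine Or.inr ((hmkeq _ _).mpr (Or.inr (Prod.ext ?_ ?_)))
          · show a * sx = a * x
            rw [hx']
          · show sy = c * y
            rw [hy', ← mul_assoc, hc_sq, one_mul]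
        · exact Or.inr ((hmkeq _ _).mpr (Or.inl (Prod.ext hx'.symm hy'.symm)))
        · refine Or.inl ((hmkeq _ _).mpr (Or.inr (Prod.ext ?_ ?_)))
          · show sx = a * x
            rw [hx', ← mul_assoc, ha_sq, one_mul]
          · show sy = c * y
            rw [hy', ← mul_assoc, hc_sq, one_mul]
    have hdisj : ∀ w ∈ U, s₀ w ≠ s₁ w := by
      intro w _ h
      rw [hs₀def, hs₁def] at h
      rcases (hmkeq _ _).mp h with h' | h'
      · exact ha_ne (mul_eq_right.mp (congrArg Prod.fst h'))
      · have h2 : eqq.symm w.2 = c * eqq.symm w.2 := congrArg Prod.snd h'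
        exact hc_ne (mul_eq_right.mp h2.symm)
    have hV₀ : IsOpen (s₀ '' U) := by
      have himg : s₀ '' U =
          (QuotientGroup.mk : A × C → (A × C) ⧸ Z) '' (ep.source ×ˢ eqq.source) := by
        ext w
        constructor
        · rintro ⟨⟨b, d⟩, ⟨hb, hd⟩, rfl⟩
          exact ⟨(ep.symm b, eqq.symm d), ⟨ep.map_target hb, eqq.map_target hd⟩, rfl⟩
        · rintro ⟨⟨u, v⟩, ⟨hu, hv⟩, rfl⟩
          refine ⟨(ep u, eqq v), ⟨ep.map_source hu, eqq.map_source hv⟩, ?_⟩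
          show QuotientGroup.mk (ep.symm (ep u), eqq.symm (eqq v)) = QuotientGroup.mk (u, v)
          rw [ep.left_inv hu, eqq.left_inv hv]
      rw [himg]
      exact QuotientGroup.isOpenMap_coe _ (ep.open_source.prod eqq.open_source)
    have hV₁ : IsOpen (s₁ '' U) := by
      have himg : s₁ '' U =
          (QuotientGroup.mk : A × C → (A × C) ⧸ Z) ''
            (((a * ·) '' ep.source) ×ˢ eqq.source) := by
        ext w
        constructor
        · rintro ⟨⟨b, d⟩, ⟨hb, hd⟩, rfl⟩
          exact ⟨(a * ep.symm b, eqq.symm d),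
            ⟨⟨ep.symm b, ep.map_target hb, rfl⟩, eqq.map_target hd⟩, rfl⟩
        · rintro ⟨⟨u, v⟩, ⟨⟨u', hu', rfl⟩, hv⟩, rfl⟩
          refine ⟨(ep u', eqq v), ⟨ep.map_source hu', eqq.map_source hv⟩, ?_⟩
          show QuotientGroup.mk (a * ep.symm (ep u'), eqq.symm (eqq v)) =
            QuotientGroup.mk (a * u', v)
          rw [ep.left_inv hu', eqq.left_inv hv]
      rw [himg]
      refine QuotientGroup.isOpenMap_coe _ (IsOpen.prod ?_ eqq.open_source)
      exact (Homeomorph.mulLeft a).isOpenMap _ ep.open_source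
    exact (isEvenlyCovered_of_two_sections hΦc hU hz hs₀c hs₁c hfs₀ hfs₁
      hcover hdisj hV₀ hV₁).to_isEvenlyCovered_preimage
  · -- fibre cardinality
    intro z
    obtain ⟨x₀, hx₀⟩ := hp_surj z.1
    obtain ⟨y₀, hy₀⟩ := hq_surj z.2
    have hset : (⇑Φ ⁻¹' {z}) =
        {QuotientGroup.mk (x₀, y₀), QuotientGroup.mk (a * x₀, y₀)} := by
      ext e
      induction e using QuotientGroup.induction_on with
      | H g =>
        obtain ⟨x, y⟩ := g
        simp only [Set.mem_preimage, Set.mem_singleton_iff, Set.mem_insert_iff]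
        rw [hΦmk]
        dsimp only
        constructor
        · intro he
          have hpx : p x = p x₀ := by rw [hx₀, ← he]
          have hqy : q y = q y₀ := by rw [hy₀, ← he]
          rcases key_p x x₀ hpx with hx' | hx' <;> rcases key_q y y₀ hqy with hy' | hy'
          · exact Or.inl ((hmkeq _ _).mpr (Or.inl (Prod.ext hx'.symm hy'.symm)))
          · refine Or.inr ((hmkeq _ _).mpr (Or.inr (Prod.ext ?_ ?_)))
            · show a * x₀ = a * x
              rw [hx']
            · show y₀ = c * y
              rw [hy', ← mul_assoc, hc_sq, one_mul]
          · exact Or.inr ((hmkeq _ _).mpr (Or.inl (Prod.ext hx'.symm hy'.symm)))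
          · refine Or.inl ((hmkeq _ _).mpr (Or.inr (Prod.ext ?_ ?_)))
            · show x₀ = a * x
              rw [hx', ← mul_assoc, ha_sq, one_mul]
            · show y₀ = c * y
              rw [hy', ← mul_assoc, hc_sq, one_mul]
        · rintro (h | h)
          · rcases (hmkeq _ _).mp h with h' | h'
            · have h1 : x = x₀ := (Prod.ext_iff.mp h'.symm).1
              have h2 : y = y₀ := (Prod.ext_iff.mp h'.symm).2
              refine Prod.ext ?_ ?_
              · show p x = z.1
                rw [h1, hx₀]
              · show q y = z.2
                rw [h2, hy₀]
            · have h1 : x₀ = a * x := (Prod.ext_iff.mp h').1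
              have h2 : y₀ = c * y := (Prod.ext_iff.mp h').2
              refine Prod.ext ?_ ?_
              · show p x = z.1
                rw [← hx₀, h1, map_mul, ha_ker, one_mul]
              · show q y = z.2
                rw [← hy₀, h2, map_mul, hc_ker, one_mul]
          · rcases (hmkeq _ _).mp h with h' | h'
            · have h1 : x = a * x₀ := (Prod.ext_iff.mp h'.symm).1
              have h2 : y = y₀ := (Prod.ext_iff.mp h'.symm).2
              refine Prod.ext ?_ ?_
              · show p x = z.1
                rw [h1, map_mul, ha_ker, one_mul, hx₀]
              · show q y = z.2
                rw [h2, hy₀]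
            · have h1 : a * x₀ = a * x := (Prod.ext_iff.mp h').1
              have h2 : y₀ = c * y := (Prod.ext_iff.mp h').2
              have h1' : x₀ = x := mul_left_cancel h1
              refine Prod.ext ?_ ?_
              · show p x = z.1
                rw [← h1', hx₀]
              · show q y = z.2
                rw [← hy₀, h2, map_mul, hc_ker, one_mul]
    have hne : (QuotientGroup.mk (x₀, y₀) : (A × C) ⧸ Z) ≠ QuotientGroup.mk (a * x₀, y₀) := by
      intro h
      rcases (hmkeq _ _).mp h with h' | h'
      · exact ha_ne (mul_eq_right.mp (Prod.ext_iff.mp h').1)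
      · exact hc_ne (mul_eq_right.mp ((Prod.ext_iff.mp h').2).symm)
    rw [hset, Nat.card_coe_set_eq, Set.ncard_pair hne]
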